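/- arXiv:1503.04874 — 2 statements merged into one kernel-verified Lean document; each statement's English description precedes it below -/
import Mathlib

section
/- Let m₀: ℝ → ℂ be 1-periodic, measurable, satisfying the Smith–Barnwell equality |m₀(ξ)|² + |m₀(ξ+1/2)|² = 1 a.e. Suppose ℓ ∈ L²[0,1] is 1-periodic and satisfies ℓ(ξ) conj(m₀(ξ)) + ℓ(ξ+1/2) conj(m₀(ξ+1/2)) = 0 for a.e. ξ. Then there exists a measurable 1-periodic function s such that ℓ(ξ) = e^{2πiξ} s(2ξ) conj(m₀(ξ+1/2)) for a.e. ξ. -/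
open MeasureTheory Complex Real

private lemma ae_shift {p : ℝ → Prop} (c : ℝ)
    (h : ∀ᵐ ξ : ℝ ∂volume, p ξ) : ∀ᵐ ξ : ℝ ∂volume, p (ξ + c) := by
  rw [ae_iff] at h ⊢
  have : {ξ : ℝ | ¬ p (ξ + c)} = (· + c) ⁻¹' {ξ : ℝ | ¬ p ξ} := rfl
  rw [this, measure_preimage_add_right]
  exact h

/-- If `m₀` is 1-periodic, measurable and satisfies Smith–Barnwell, and
the 1-periodic `ℓ ∈ L²[0,1]` satisfies `ℓ(ξ)conj(m₀(ξ)) + ℓ(ξ+1/2)conj(m₀(ξ+1/2)) = 0`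
a.e., then `ℓ(ξ) = e^{2πiξ} s(2ξ) conj(m₀(ξ+1/2))` a.e. for some measurable 1-periodic `s`. -/
theorem exists_s_of_orthogonality
    (m₀ : ℝ → ℂ) (hm₀per : ∀ ξ : ℝ, m₀ (ξ + 1) = m₀ ξ) (hm₀meas : Measurable m₀)
    (hSB : ∀ᵐ ξ : ℝ ∂volume, ‖m₀ ξ‖ ^ 2 + ‖m₀ (ξ + 1/2)‖ ^ 2 = 1)
    (ℓ : ℝ → ℂ) (hℓper : ∀ ξ : ℝ, ℓ (ξ + 1) = ℓ ξ)
    (hℓ : MemLp ℓ 2 ((volume : Measure ℝ).restrict (Set.Ioc 0 1)))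
    (horth : ∀ᵐ ξ : ℝ ∂volume,
      ℓ ξ * starRingEnd ℂ (m₀ ξ) + ℓ (ξ + 1/2) * starRingEnd ℂ (m₀ (ξ + 1/2)) = 0) :
    ∃ s : ℝ → ℂ, Measurable s ∧ (∀ ξ : ℝ, s (ξ + 1) = s ξ) ∧
      ∀ᵐ ξ : ℝ ∂volume,
        ℓ ξ = Complex.exp (2 * π * I * ξ) * s (2 * ξ) * starRingEnd ℂ (m₀ (ξ + 1/2)) := by
  -- a measurable representative g₀ of ℓ on (0,1]
  obtain ⟨g₀, hg₀sm, hae⟩ := hℓ.aestronglyMeasurable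
  -- periodize it
  set g : ℝ → ℂ := fun ξ => g₀ (Int.fract ξ) with hg_def
  have hgmeas : Measurable g := hg₀sm.measurable.comp measurable_fract
  have hgper : ∀ ξ : ℝ, g (ξ + 1) = g ξ := by
    intro ξ; simp only [hg_def, Int.fract_add_one]
  -- ℓ = g a.e. on (0,1]
  have hae2 : ∀ᵐ ξ ∂((volume : Measure ℝ).restrict (Set.Ioc 0 1)), ℓ ξ = g ξ := by
    have h1 : ∀ᵐ ξ ∂((volume : Measure ℝ).restrict (Set.Ioc 0 1)), ξ ∈ Set.Ioc (0:ℝ) 1 :=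
      ae_restrict_mem measurableSet_Ioc
    have h2 : ∀ᵐ ξ ∂((volume : Measure ℝ).restrict (Set.Ioc 0 1)), ξ ≠ (1:ℝ) := by
      refine ae_iff.2 (le_antisymm (le_trans ?_ (le_of_eq (Real.volume_singleton (a := 1))))
        zero_le)
      set_option linter.unnecessarySimpa false in
      simpa using (Measure.restrict_le_self (μ := (volume : Measure ℝ))
        (s := Set.Ioc 0 1) {ξ : ℝ | ¬ ξ ≠ 1})
    filter_upwards [hae, h1, h2] with ξ hξ hmem hne
    have hfr : Int.fract ξ = ξ :=
      Int.fract_eq_self.2 ⟨le_of_lt hmem.1, lt_of_le_of_ne hmem.2 hne⟩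
    simp only [hg_def, hfr]; exact hξ
  -- ℓ = g a.e. on ℝ, using periodicity
  have hℓint : ∀ (ξ : ℝ) (n : ℤ), ℓ (ξ + n) = ℓ ξ := by
    intro ξ n
    have := (Function.Periodic.int_mul (f := ℓ) (c := 1) hℓper n) ξ
    simpa using this
  have hgint : ∀ (ξ : ℝ) (n : ℤ), g (ξ + n) = g ξ := by
    intro ξ n
    have := (Function.Periodic.int_mul (f := g) (c := 1) hgper n) ξ
    simpa using this
  have hg : ∀ᵐ ξ : ℝ ∂volume, ℓ ξ = g ξ := by
    rw [ae_iff]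
    set N : Set ℝ := {ξ | ¬ ℓ ξ = g ξ} ∩ Set.Ioc 0 1 with hN_def
    have hNnull : volume N = 0 := by
      have := ae_iff.1 hae2
      rwa [Measure.restrict_apply' measurableSet_Ioc] at this
    have hsub : {ξ : ℝ | ¬ ℓ ξ = g ξ} ⊆ ⋃ n : ℤ, (· + (n:ℝ)) ⁻¹' N := by
      intro ξ hξ
      refine Set.mem_iUnion.2 ⟨1 - ⌈ξ⌉, ?_⟩
      have hmem : ξ + ((1 - ⌈ξ⌉ : ℤ) : ℝ) ∈ Set.Ioc (0:ℝ) 1 := by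
        have h1 := Int.ceil_lt_add_one ξ
        have h2 := Int.le_ceil ξ
        constructor <;> push_cast <;> linarith
      refine ⟨?_, hmem⟩
      show ¬ ℓ (ξ + ((1 - ⌈ξ⌉ : ℤ) : ℝ)) = g (ξ + ((1 - ⌈ξ⌉ : ℤ) : ℝ))
      rw [hℓint ξ (1 - ⌈ξ⌉), hgint ξ (1 - ⌈ξ⌉)]
      exact hξ
    refine measure_mono_null hsub (measure_iUnion_null fun n => ?_)
    rw [measure_preimage_add_right]
    exact hNnull
  -- define λ and s
  set lam : ℝ → ℂ := fun ξ => g ξ * m₀ (ξ + 1/2) - g (ξ + 1/2) * m₀ ξ with hlam_def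
  have hlam_anti : ∀ ξ : ℝ, lam (ξ + 1/2) = -lam ξ := by
    intro ξ
    have e1 : ξ + 1/2 + 1/2 = ξ + 1 := by ring
    simp only [hlam_def, e1, hgper, hm₀per]
    ring
  refine ⟨fun ξ => Complex.exp (-(π * I * ξ)) * lam (ξ / 2), ?_, ?_, ?_⟩
  · -- measurability
    have hlam_meas : Measurable lam := by
      apply Measurable.sub
      · exact hgmeas.mul (hm₀meas.comp (measurable_id.add_const _))
      · exact (hgmeas.comp (measurable_id.add_const _)).mul hm₀meas
    refine Measurable.mul ?_ (hlam_meas.comp (measurable_id.div_const 2))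
    exact Complex.measurable_exp.comp
      ((measurable_const.mul Complex.measurable_ofReal).neg)
  · -- periodicity of s
    intro ξ
    have e1 : (ξ + 1) / 2 = ξ / 2 + 1/2 := by ring
    show Complex.exp (-(↑π * I * ((ξ + 1 : ℝ) : ℂ))) * lam ((ξ + 1) / 2)
        = Complex.exp (-(↑π * I * (ξ : ℂ))) * lam (ξ / 2)
    rw [e1, hlam_anti]
    have e2 : -(↑π * I * (↑ξ + 1 : ℝ)) = -(↑π * I * ξ) + (-(↑π * I)) := by
      push_cast; ring
    rw [e2, Complex.exp_add]
    have e3 : Complex.exp (-(↑π * I)) = -1 := by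
      rw [Complex.exp_neg, Complex.exp_pi_mul_I]
      norm_num
    rw [e3]; ring
  · -- main a.e. identity
    have hg2 : ∀ᵐ ξ : ℝ ∂volume, ℓ (ξ + 1/2) = g (ξ + 1/2) :=
      ae_shift (1/2) hg
    filter_upwards [hSB, horth, hg, hg2] with ξ hSBξ horthξ hgξ hg2ξ
    -- turn SB into a complex identity
    have hSBC : m₀ ξ * starRingEnd ℂ (m₀ ξ)
        + m₀ (ξ + 1/2) * starRingEnd ℂ (m₀ (ξ + 1/2)) = 1 := by
      rw [Complex.mul_conj', Complex.mul_conj']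
      rw [← Complex.ofReal_pow, ← Complex.ofReal_pow, ← Complex.ofReal_add, hSBξ,
        Complex.ofReal_one]
    have horthg : g ξ * starRingEnd ℂ (m₀ ξ)
        + g (ξ + 1/2) * starRingEnd ℂ (m₀ (ξ + 1/2)) = 0 := by
      rw [← hgξ, ← hg2ξ]; exact horthξ
    have key : g ξ = lam ξ * starRingEnd ℂ (m₀ (ξ + 1/2)) := by
      simp only [hlam_def]
      linear_combination m₀ ξ * horthg - g ξ * hSBC
    calc ℓ ξ = g ξ := hgξ
      _ = lam ξ * starRingEnd ℂ (m₀ (ξ + 1/2)) := key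
      _ = Complex.exp (2 * ↑π * I * ↑ξ)
            * (Complex.exp (-(↑π * I * ((2 * ξ : ℝ))) ) * lam ((2 * ξ) / 2))
            * starRingEnd ℂ (m₀ (ξ + 1/2)) := by
          have e : (2 * ξ) / 2 = ξ := by ring
          rw [e]
          have : Complex.exp (2 * ↑π * I * ↑ξ) * Complex.exp (-(↑π * I * ((2 * ξ : ℝ)))) = 1 := by
            rw [← Complex.exp_add]
            have h0 : (2 * ↑π * I * ↑ξ) + (-(↑π * I * ((2 * ξ : ℝ) : ℂ))) = 0 := by
              push_cast; ring
            rw [h0, Complex.exp_zero]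
          calc lam ξ * starRingEnd ℂ (m₀ (ξ + 1/2))
              = (Complex.exp (2 * ↑π * I * ↑ξ) * Complex.exp (-(↑π * I * ((2 * ξ : ℝ)))))
                * lam ξ * starRingEnd ℂ (m₀ (ξ + 1/2)) := by rw [this]; ring
            _ = _ := by ring
end

section
/- If (V_j)_{j∈ℤ} is an increasing sequence of closed subspaces of a Hilbert space H with dense union, and W_j is defined as the orthogonal complement of V_j inside V_{j+1}, then H is the orthogonal direct sum of the W_j together with the intersection ∩_j V_j; in particular if ∩_j V_j = {0}, then H = ⊕_{j∈ℤ} W_j (orthogonal Hilbert space direct sum). -/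
open MeasureTheory
open scoped InnerProductSpace

/-- If `(V_j)_{j∈ℤ}` is an increasing sequence of closed subspaces of a
separable Hilbert space `H` with dense union, and `W_j := V_{j+1} ∩ V_j^⊥`, then the
`W_j` are pairwise orthogonal, each is orthogonal to `⋂_j V_j`, and together with
`⋂_j V_j` they span a dense subspace of `H`; in particular if `⋂_j V_j = {0}`, then
`H` is the orthogonal Hilbert direct sum of the `W_j`. -/
theorem orthogonal_decomposition_of_increasing_subspaces
    {H : Type*} [NormedAddCommGroup H] [InnerProductSpace ℂ H] [CompleteSpace H]
    [TopologicalSpace.SeparableSpace H]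
    (V : ℤ → Submodule ℂ H)
    (hclosed : ∀ j : ℤ, IsClosed (V j : Set H))
    (hmono : ∀ j : ℤ, V j ≤ V (j + 1))
    (hdense : Dense (⋃ j : ℤ, (V j : Set H)))
    (W : ℤ → Submodule ℂ H) (hW : ∀ j : ℤ, W j = V (j + 1) ⊓ (V j)ᗮ) :
    (∀ i j : ℤ, i ≠ j → ∀ f ∈ W i, ∀ g ∈ W j, ⟪f, g⟫_ℂ = 0) ∧
    (∀ j : ℤ, ∀ f ∈ W j, ∀ g ∈ (⨅ i : ℤ, V i), ⟪f, g⟫_ℂ = 0) ∧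
    ((⨅ j : ℤ, V j) ⊔ (⨆ j : ℤ, W j)).topologicalClosure = ⊤ ∧
    ((⨅ j : ℤ, V j) = ⊥ → (⨆ j : ℤ, W j).topologicalClosure = ⊤) := by
  have hVmono : Monotone V := monotone_int_of_le_succ hmono
  have hWle : ∀ j, W j ≤ V (j + 1) := fun j => (hW j) ▸ inf_le_left
  have hWperp : ∀ j, W j ≤ (V j)ᗮ := fun j => (hW j) ▸ inf_le_right
  -- pairwise orthogonality (one-sided version)
  have horth : ∀ i j : ℤ, i < j → ∀ f ∈ W i, ∀ g ∈ W j, ⟪f, g⟫_ℂ = 0 := by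
    intro i j hij f hf g hg
    have hfV : f ∈ V j := hVmono (by omega : i + 1 ≤ j) (hWle i hf)
    exact (Submodule.mem_orthogonal (V j) g).mp (hWperp j hg) f hfV
  have part1 : ∀ i j : ℤ, i ≠ j → ∀ f ∈ W i, ∀ g ∈ W j, ⟪f, g⟫_ℂ = 0 := by
    intro i j hij f hf g hg
    rcases hij.lt_or_gt with h | h
    · exact horth i j h f hf g hg
    · exact inner_eq_zero_symm.mpr (horth j i h g hg f hf)
  have part2 : ∀ j : ℤ, ∀ f ∈ W j, ∀ g ∈ (⨅ i : ℤ, V i), ⟪f, g⟫_ℂ = 0 := by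
    intro j f hf g hg
    have hgV : g ∈ V j := (Submodule.mem_iInf V).mp hg j
    exact (Submodule.mem_orthogonal' (V j) f).mp (hWperp j hf) g hgV
  have part3 : ((⨅ j : ℤ, V j) ⊔ (⨆ j : ℤ, W j)).topologicalClosure = ⊤ := by
    rw [Submodule.topologicalClosure_eq_top_iff]
    rw [Submodule.eq_bot_iff]
    intro x hx
    have inst : ∀ j : ℤ, Submodule.HasOrthogonalProjection (V j) := fun j =>
      haveI := (hclosed j).completeSpace_coe; inferInstance
    set P : ℤ → H := fun j =>
      (haveI := inst j; (V j).orthogonalProjectionOnto x : H) with hP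
    have hPmem : ∀ j, P j ∈ V j := fun j => (haveI := inst j; (V j).orthogonalProjectionOnto x).2
    have hPinner : ∀ j, ∀ v ∈ V j, ⟪x - P j, v⟫_ℂ = 0 := fun j =>
      fun v hv => by haveI := inst j; exact (V j).starProjection_inner_eq_zero x v hv
    -- x is orthogonal to every W j and to the intersection
    have hxW : ∀ j, ∀ w ∈ W j, ⟪w, x⟫_ℂ = 0 := by
      intro j w hw
      exact hx w (Submodule.mem_sup_right ((le_iSup W j) hw))
    have hxI : ∀ g ∈ (⨅ j : ℤ, V j), ⟪g, x⟫_ℂ = 0 := fun g hg =>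
      hx g (Submodule.mem_sup_left hg)
    -- consecutive projections agree
    have hstep : ∀ j : ℤ, P (j + 1) = P j := by
      intro j
      set w : H := P (j + 1) - P j with hw
      have hw1 : w ∈ V (j + 1) := Submodule.sub_mem _ (hPmem (j + 1)) (hmono j (hPmem j))
      have hw2 : w ∈ (V j)ᗮ := by
        rw [Submodule.mem_orthogonal']
        intro v hv
        have h1 : ⟪P (j + 1) - x, v⟫_ℂ = 0 := by
          rw [← neg_sub, inner_neg_left, hPinner (j + 1) v (hmono j hv), neg_zero]
        have h2 : ⟪x - P j, v⟫_ℂ = 0 := hPinner j v hv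
        rw [show w = (P (j + 1) - x) + (x - P j) from by rw [hw]; abel,
          inner_add_left, h1, h2, add_zero]
      have hwW : w ∈ W j := (hW j).symm ▸ Submodule.mem_inf.mpr ⟨hw1, hw2⟩
      have hxw : ⟪x, w⟫_ℂ = 0 := inner_eq_zero_symm.mp (hxW j w hwW)
      have hww : ⟪w, w⟫_ℂ = 0 := by
        have h1 : ⟪P j, w⟫_ℂ = 0 :=
          (Submodule.mem_orthogonal (V j) w).mp hw2 (P j) (hPmem j)
        have h2 : ⟪x - P (j + 1), w⟫_ℂ = 0 := hPinner (j + 1) w hw1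
        have h3 : ⟪P (j + 1), w⟫_ℂ = ⟪x, w⟫_ℂ := by
          have := inner_sub_left (𝕜 := ℂ) x (P (j + 1)) w
          rw [h2] at this
          linear_combination this
        calc ⟪w, w⟫_ℂ = ⟪P (j + 1), w⟫_ℂ - ⟪P j, w⟫_ℂ := inner_sub_left _ _ _
          _ = 0 := by rw [h3, hxw, h1, sub_zero]
      have : w = 0 := inner_self_eq_zero.mp hww
      exact sub_eq_zero.mp this
    -- hence all projections are equal to P 0
    have hconst : ∀ j : ℤ, P j = P 0 := by
      intro j
      induction j using Int.induction_on with
      | zero => rfl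
      | succ k ih => rw [hstep k]; exact ih
      | pred k ih => rw [← ih, ← hstep (-k - 1)]; norm_num
    -- P 0 lies in the intersection
    have hmemI : P 0 ∈ (⨅ j : ℤ, V j) := by
      rw [Submodule.mem_iInf]
      intro j
      rw [← hconst j]
      exact hPmem j
    have hy0 : P 0 = 0 := by
      have h1 : ⟪P 0, x⟫_ℂ = 0 := hxI (P 0) hmemI
      have h2 : ⟪x - P 0, P 0⟫_ℂ = 0 := hPinner 0 (P 0) (hPmem 0)
      have h3 : ⟪P 0, P 0⟫_ℂ = 0 := by
        have := inner_sub_left (𝕜 := ℂ) x (P 0) (P 0)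
        rw [h2] at this
        have hx0 : ⟪x, P 0⟫_ℂ = 0 := inner_eq_zero_symm.mp h1
        linear_combination this + hx0
      exact inner_self_eq_zero.mp h3
    -- thus x is orthogonal to every V j
    have hxV : ∀ j, x ∈ (V j)ᗮ := by
      intro j
      rw [Submodule.mem_orthogonal']
      intro v hv
      have := hPinner j v hv
      rwa [hconst j, hy0, sub_zero] at this
    have hxU : x ∈ (⨆ j : ℤ, V j)ᗮ := by
      rw [← Submodule.iInf_orthogonal]
      exact Submodule.mem_iInf _ |>.mpr hxV
    have hUdense : Dense ((⨆ j : ℤ, V j : Submodule ℂ H) : Set H) := by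
      apply hdense.mono
      exact Set.iUnion_subset fun j => le_iSup V j
    exact hUdense.eq_zero_of_mem_orthogonal hxU
  refine ⟨part1, part2, part3, fun hbot => ?_⟩
  rw [hbot, bot_sup_eq] at part3
  exact part3
end
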